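/- A language L of well-matched words is a visibly pushdown language (accepted by a visibly pushdown automaton) if and only if L is recognised by a finite Ext-algebra. -/

import Mathlib

inductive VPKind : Type
  | call | ret | intern
deriving DecidableEq

class VPAlphabet (A : Type) where
  kind : A → VPKind

variable {A : Type} [VPAlphabet A]

inductive WellMatched : List A → Prop
  | nil : WellMatched []
  | intern (c : A) (hc : VPAlphabet.kind c = VPKind.intern) : WellMatched [c]
  | ext (a b : A) (w : List A) (ha : VPAlphabet.kind a = VPKind.call)
      (hb : VPAlphabet.kind b = VPKind.ret) (hw : WellMatched w) :
      WellMatched (a :: w ++ [b])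
  | append (u v : List A) (hu : WellMatched u) (hv : WellMatched v) : WellMatched (u ++ v)

theorem wm_insert {u v x : List A} (h : WellMatched (u ++ v)) (hx : WellMatched x) :
    WellMatched (u ++ x ++ v) := by
  suffices H : ∀ w, WellMatched w → ∀ u' v' : List A, w = u' ++ v' →
      WellMatched (u' ++ x ++ v') from H _ h u v rfl
  intro w hw
  induction hw with
  | nil =>
    intro u' v' huv
    obtain ⟨rfl, rfl⟩ := List.append_eq_nil_iff.mp huv.symm
    simpa using hx
  | intern c hc =>
    intro u' v' huv
    rcases u' with _ | ⟨a, u''⟩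
    · simp only [List.nil_append] at huv
      subst huv
      simpa using WellMatched.append x [c] hx (WellMatched.intern c hc)
    · have h1 : c = a := by injection huv
      have h2 : ([] : List A) = u'' ++ v' := by injection huv
      obtain ⟨rfl, rfl⟩ := List.append_eq_nil_iff.mp h2.symm
      subst h1
      simpa using WellMatched.append [c] x (WellMatched.intern c hc) hx
  | ext a b w' ha hb hw' ih =>
    intro u' v' huv
    rcases u' with _ | ⟨a'', u''⟩
    · simp only [List.nil_append] at huv
      subst huv
      simpa using WellMatched.append x _ hx (WellMatched.ext a b w' ha hb hw')
    · have h1 : a = a'' := by injection huv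
      have huv2 : w' ++ [b] = u'' ++ v' := by injection huv
      subst h1
      rcases List.eq_nil_or_concat v' with rfl | ⟨v'', b'', rfl⟩
      · have h3 : u'' = w' ++ [b] := by simpa using huv2.symm
        subst h3
        simpa using WellMatched.append _ x (WellMatched.ext a b w' ha hb hw') hx
      · have h4 : w' = u'' ++ v'' ∧ [b] = [b''] :=
          List.append_inj' (by simpa [List.append_assoc] using huv2) rfl
        obtain ⟨rfl, hb'⟩ := h4
        have hbb : b = b'' := by injection hb'
        subst hbb
        have := WellMatched.ext a b _ ha hb (ih u'' v'' rfl)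
        simpa [List.append_assoc] using this
  | append w₁ w₂ h₁ h₂ ih₁ ih₂ =>
    intro u' v' huv
    rcases List.append_eq_append_iff.mp huv with ⟨a', rfl, rfl⟩ | ⟨c', rfl, rfl⟩
    · have := WellMatched.append _ _ h₁ (ih₂ a' v' rfl)
      simpa [List.append_assoc] using this
    · have := WellMatched.append _ _ (ih₁ u' c' rfl) h₂
      simpa [List.append_assoc] using this

def WM (A : Type) [VPAlphabet A] : Type := {w : List A // WellMatched w}

instance : Monoid (WM A) where
  one := ⟨[], WellMatched.nil⟩
  mul u v := ⟨u.1 ++ v.1, WellMatched.append _ _ u.2 v.2⟩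
  mul_assoc a b c := Subtype.ext (List.append_assoc _ _ _)
  one_mul a := Subtype.ext (List.nil_append _)
  mul_one a := Subtype.ext (List.append_nil _)

@[simp] theorem WM.mul_val (x y : WM A) : (x * y).1 = x.1 ++ y.1 := rfl
@[simp] theorem WM.one_val : (1 : WM A).1 = [] := rfl

instance : Nonempty (WM A) := ⟨1⟩

def extWord (u v : List A) (h : WellMatched (u ++ v)) (x : WM A) : WM A :=
  ⟨u ++ x.1 ++ v, wm_insert h x.2⟩

@[simp] theorem extWord_val (u v : List A) (h : WellMatched (u ++ v)) (x : WM A) :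
    (extWord u v h x).1 = u ++ x.1 ++ v := rfl

structure ExtAlgebra (R : Type*) [Monoid R] where
  O : Submonoid (Function.End R)
  mulLeft_mem : ∀ r : R, (fun x => r * x) ∈ O
  mulRight_mem : ∀ r : R, (fun x => x * r) ∈ O

structure ExtAlgHom {R S : Type*} [Monoid R] [Monoid S]
    (ER : ExtAlgebra R) (ES : ExtAlgebra S) where
  toMonoidHom : R →* S
  opMap : ER.O →* ES.O
  compat : ∀ (e : ER.O) (r : R),
    (opMap e : Function.End S) (toMonoidHom r) = toMonoidHom ((e : Function.End R) r)

/-- A morphism of `Ext`-algebras from the free `Ext`-algebra of well-matched words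
into an `Ext`-algebra `R`, given by its monoid part and by the images of the
operations `ext_{u,v}`. -/
structure ExtHomWM (A : Type) [VPAlphabet A] {R : Type*} [Monoid R] (ER : ExtAlgebra R) where
  toMonoidHom : WM A →* R
  op : ∀ u v : List A, WellMatched (u ++ v) → ER.O
  op_one : op [] [] WellMatched.nil = 1
  op_comp : ∀ u v (h : WellMatched (u ++ v)) u' v' (h' : WellMatched (u' ++ v'))
      (h'' : WellMatched ((u ++ u') ++ (v' ++ v))),
      op (u ++ u') (v' ++ v) h'' = op u v h * op u' v' h'
  op_spec : ∀ u v (h : WellMatched (u ++ v)) (x : WM A),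
      (op u v h : Function.End R) (toMonoidHom x) = toMonoidHom (extWord u v h x)

/-- `R` recognises `L` via the morphism `φ` when `L` is the preimage of its image. -/
def Recognises {R : Type*} [Monoid R] {ER : ExtAlgebra R}
    (φ : ExtHomWM A ER) (L : Set (WM A)) : Prop :=
  L = φ.toMonoidHom ⁻¹' (φ.toMonoidHom '' L)

/-- The free `Ext`-algebra structure on the monoid of well-matched words. -/
def freeExt (A : Type) [VPAlphabet A] : ExtAlgebra (WM A) where
  O :=
    { carrier := {e | ∃ u v, ∃ h : WellMatched (u ++ v), ∀ x : WM A, e x = extWord u v h x}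
      one_mem' := ⟨[], [], WellMatched.nil, fun x => Subtype.ext (by show x.1 = [] ++ x.1 ++ []; simp)⟩
      mul_mem' := by
        rintro e f ⟨u, v, h, he⟩ ⟨u', v', h', hf⟩
        have h'' : WellMatched ((u ++ u') ++ (v' ++ v)) := by
          simpa [List.append_assoc] using wm_insert h h'
        exact ⟨u ++ u', v' ++ v, h'', fun x => by
          rw [show (e * f) x = e (f x) from rfl, hf, he]
          exact Subtype.ext (by simp [List.append_assoc])⟩ }
  mulLeft_mem r := ⟨r.1, [], by simpa using r.2, fun x => Subtype.ext (by simp)⟩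
  mulRight_mem r := ⟨[], r.1, by simpa using r.2, fun x => Subtype.ext (by simp)⟩

/-- A sub-`Ext`-algebra of an `Ext`-algebra. -/
structure SubExt {S : Type*} [Monoid S] (ES : ExtAlgebra S) where
  carrier : Submonoid S
  ops : Submonoid (Function.End S)
  ops_le : ops ≤ ES.O
  maps_to : ∀ e ∈ ops, ∀ x ∈ carrier, e x ∈ carrier
  mulLeft_mem : ∀ r ∈ carrier, (fun x => r * x) ∈ ops
  mulRight_mem : ∀ r ∈ carrier, (fun x => x * r) ∈ ops

/-- The `Ext`-algebra structure induced on a sub-`Ext`-algebra. -/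
def SubExt.toExtAlgebra {S : Type*} [Monoid S] {ES : ExtAlgebra S} (T : SubExt ES) :
    ExtAlgebra T.carrier where
  O :=
    { carrier := {e : Function.End T.carrier | ∃ f ∈ T.ops, ∀ x : T.carrier, (e x : S) = f x}
      one_mem' := ⟨1, T.ops.one_mem, fun _ => rfl⟩
      mul_mem' := by
        rintro e e' ⟨f, hf, he⟩ ⟨f', hf', he'⟩
        exact ⟨f * f', mul_mem hf hf', fun x => by
          rw [show (e * e') x = e (e' x) from rfl, show (f * f') (x : S) = f (f' x) from rfl,
            ← he', he]⟩ }
  mulLeft_mem r := ⟨fun x => (r : S) * x, T.mulLeft_mem r r.2, fun _ => rfl⟩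
  mulRight_mem r := ⟨fun x => x * (r : S), T.mulRight_mem r r.2, fun _ => rfl⟩

/-- `ER` is a quotient of `ES` if there is a surjective morphism of `Ext`-algebras
from `ES` onto `ER`. -/
def IsQuotientOf {R S : Type*} [Monoid R] [Monoid S]
    (ER : ExtAlgebra R) (ES : ExtAlgebra S) : Prop :=
  ∃ h : ExtAlgHom ES ER, Function.Surjective h.toMonoidHom ∧ Function.Surjective h.opMap

/-- Bundled finite `Ext`-algebras. -/
structure BExt : Type 1 where
  carrier : Type
  [mon : Monoid carrier]
  [fin : Finite carrier]
  ext : ExtAlgebra carrier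

attribute [instance] BExt.mon BExt.fin

/-! ### Visibly pushdown automata -/

structure VPA (A : Type) [VPAlphabet A] where
  Q : Type
  [finQ : Finite Q]
  q0 : Q
  Γ : Type
  [finΓ : Finite Γ]
  bot : Γ
  δ : A → Q → Γ → Q × List Γ
  F : Set Q
  call_spec : ∀ a q G, VPAlphabet.kind a = VPKind.call → ∃ G', (δ a q G).2 = [G', G]
  ret_spec : ∀ a q G, VPAlphabet.kind a = VPKind.ret → (δ a q G).2 = []
  int_spec : ∀ a q G, VPAlphabet.kind a = VPKind.intern → (δ a q G).2 = [G]

attribute [instance] VPA.finQ VPA.finΓ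

def VPA.runAux (M : VPA A) : List A → M.Q → List M.Γ → M.Q × List M.Γ
  | [], q, s => (q, s)
  | _ :: w, q, [] => M.runAux w q []
  | a :: w, q, G :: s => M.runAux w (M.δ a q G).1 ((M.δ a q G).2 ++ s)

def VPA.Accepts (M : VPA A) (w : List A) : Prop :=
  (M.runAux w M.q0 [M.bot]).1 ∈ M.F ∧ (M.runAux w M.q0 [M.bot]).2 = [M.bot]

/-- The language of well-matched words accepted by a VPA. -/
def VPA.lang (M : VPA A) : Set (WM A) := {w | M.Accepts w.1}

/-- `L` is a visibly pushdown language: it is accepted by a visibly pushdown automaton. -/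
def IsVPL (L : Set (WM A)) : Prop := ∃ M : VPA A, L = M.lang



namespace Statement5Aux
open VPAlphabet

variable {A : Type} [VPAlphabet A]

def ncC (w : List A) : ℕ := w.countP (fun a => decide (kind a = VPKind.call))
def ncR (w : List A) : ℕ := w.countP (fun a => decide (kind a = VPKind.ret))

@[simp] lemma ncC_nil : ncC ([] : List A) = 0 := rfl
@[simp] lemma ncR_nil : ncR ([] : List A) = 0 := rfl
lemma ncC_cons (a : A) (w : List A) :
    ncC (a :: w) = ncC w + (if kind a = VPKind.call then 1 else 0) := by
  simp [ncC, List.countP_cons]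
lemma ncR_cons (a : A) (w : List A) :
    ncR (a :: w) = ncR w + (if kind a = VPKind.ret then 1 else 0) := by
  simp [ncR, List.countP_cons]
@[simp] lemma ncC_append (u v : List A) : ncC (u ++ v) = ncC u + ncC v := by
  simp [ncC, List.countP_append]
@[simp] lemma ncR_append (u v : List A) : ncR (u ++ v) = ncR u + ncR v := by
  simp [ncR, List.countP_append]

lemma prefix_append_cases {p u v : List A} (h : p <+: u ++ v) :
    p <+: u ∨ ∃ q, p = u ++ q ∧ q <+: v := by
  obtain ⟨t, ht⟩ := h
  rcases List.append_eq_append_iff.mp ht with ⟨a', ha, _⟩ | ⟨c', hc, hd⟩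
  · exact Or.inl ⟨a', ha.symm⟩
  · exact Or.inr ⟨c', hc, ⟨t, hd.symm⟩⟩

lemma prefix_single {p : List A} {a : A} (h : p <+: [a]) : p = [] ∨ p = [a] := by
  obtain ⟨t, ht⟩ := h
  cases p with
  | nil => exact Or.inl rfl
  | cons b q =>
    have hb : b = a := by injection ht
    have hq : q ++ t = [] := by injection ht
    obtain ⟨rfl, rfl⟩ := List.append_eq_nil_iff.mp hq
    exact Or.inr (by rw [hb])

lemma wm_counts {w : List A} (h : WellMatched w) :
    ncR w = ncC w ∧ ∀ p, p <+: w → ncR p ≤ ncC p := by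
  induction h with
  | nil =>
    exact ⟨rfl, fun p hp => by simp [List.prefix_nil.mp hp]⟩
  | intern c hc =>
    constructor
    · simp [ncR_cons, ncC_cons, hc]
    · intro p hp
      rcases prefix_single hp with rfl | rfl
      · simp
      · simp [ncR_cons, ncC_cons, hc]
  | ext a b w ha hb hw ih =>
    constructor
    · simp [ncR_cons, ncC_cons, ha, hb, ih.1]
    · intro p hp
      cases p with
      | nil => simp
      | cons a' p' =>
        obtain ⟨rfl, hp'⟩ := List.cons_prefix_cons.mp hp
        rcases prefix_append_cases hp' with h1 | ⟨q, rfl, hq⟩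
        · have := ih.2 p' h1
          simp [ncR_cons, ncC_cons, ha]; omega
        · rcases prefix_single hq with rfl | rfl
          · simp [ncR_cons, ncC_cons, ha, ih.1]
          · simp [ncR_cons, ncC_cons, ha, hb, ih.1]
  | append u v hu hv ihu ihv =>
    constructor
    · simp [ihu.1, ihv.1]
    · intro p hp
      rcases prefix_append_cases hp with h1 | ⟨q, rfl, hq⟩
      · exact ihu.2 p h1
      · have h2 := ihv.2 q hq
        have h3 := ihu.1
        simp; omega

end Statement5Aux
namespace Statement5Aux
open VPAlphabet

variable {A : Type} [VPAlphabet A]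

lemma runAux_append (M : VPA A) : ∀ (u v : List A) (q : M.Q) (s : List M.Γ),
    M.runAux (u ++ v) q s = M.runAux v (M.runAux u q s).1 (M.runAux u q s).2
  | [], v, q, s => rfl
  | a :: u, v, q, [] => by
    simpa [VPA.runAux] using runAux_append M u v q []
  | a :: u, v, q, G :: s => by
    simpa [VPA.runAux] using runAux_append M u v (M.δ a q G).1 ((M.δ a q G).2 ++ s)

lemma run_frame (M : VPA A) : ∀ (w : List A) (q : M.Q) (σ τ : List M.Γ),
    (∀ p, p <+: w → ncR p < ncC p + σ.length) →
    M.runAux w q (σ ++ τ) = ((M.runAux w q σ).1, (M.runAux w q σ).2 ++ τ)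
      ∧ (M.runAux w q σ).2.length + ncR w = σ.length + ncC w
  | [], q, σ, τ, _ => by simp [VPA.runAux]
  | a :: w, q, σ, τ, hcond => by
    have hσ : 0 < σ.length := by
      have := hcond [] (List.nil_prefix)
      simpa using this
    obtain ⟨G, σ', rfl⟩ : ∃ G σ', σ = G :: σ' := by
      cases σ with
      | nil => simp at hσ
      | cons G σ' => exact ⟨G, σ', rfl⟩
    have hstep : ∀ (τ' : List M.Γ), M.runAux (a :: w) q (G :: τ') =
        M.runAux w (M.δ a q G).1 ((M.δ a q G).2 ++ τ') := fun _ => rfl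
    cases hk : kind a with
    | call =>
      obtain ⟨G'', hG⟩ := M.call_spec a q G hk
      have ih := run_frame M w (M.δ a q G).1 (G'' :: G :: σ') τ (fun p hp => by
        have := hcond (a :: p) (List.cons_prefix_cons.mpr ⟨rfl, hp⟩)
        simp [ncR_cons, ncC_cons, hk] at this ⊢
        omega)
      constructor
      · rw [show (G :: σ') ++ τ = G :: (σ' ++ τ) from rfl, hstep, hstep, hG]
        rw [show ([G'', G] : List M.Γ) ++ (σ' ++ τ) = (G'' :: G :: σ') ++ τ from by simp]
        rw [show ([G'', G] : List M.Γ) ++ σ' = G'' :: G :: σ' from by simp]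
        exact ih.1
      · rw [hstep, hG, show ([G'', G] : List M.Γ) ++ σ' = G'' :: G :: σ' from by simp]
        have := ih.2
        simp [ncR_cons, ncC_cons, hk] at this ⊢
        omega
    | ret =>
      have hG := M.ret_spec a q G hk
      have h2 : 2 ≤ (G :: σ' : List M.Γ).length := by
        have := hcond [a] (List.cons_prefix_cons.mpr ⟨rfl, List.nil_prefix⟩)
        simp [ncR_cons, ncC_cons, hk] at this
        simp only [List.length_cons]; omega
      have ih := run_frame M w (M.δ a q G).1 σ' τ (fun p hp => by
        have := hcond (a :: p) (List.cons_prefix_cons.mpr ⟨rfl, hp⟩)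
        simp [ncR_cons, ncC_cons, hk] at this ⊢
        simp at h2
        omega)
      constructor
      · rw [show (G :: σ') ++ τ = G :: (σ' ++ τ) from rfl, hstep, hstep, hG]
        simpa using ih.1
      · rw [hstep, hG]
        have := ih.2
        simp [ncR_cons, ncC_cons, hk] at this ⊢
        omega
    | intern =>
      have hG := M.int_spec a q G hk
      have ih := run_frame M w (M.δ a q G).1 (G :: σ') τ (fun p hp => by
        have := hcond (a :: p) (List.cons_prefix_cons.mpr ⟨rfl, hp⟩)
        simp [ncR_cons, ncC_cons, hk] at this ⊢
        omega)
      constructor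
      · rw [show (G :: σ') ++ τ = G :: (σ' ++ τ) from rfl, hstep, hstep, hG]
        simpa using ih.1
      · rw [hstep, hG]
        have := ih.2
        simp [ncR_cons, ncC_cons, hk] at this ⊢
        omega

end Statement5Aux
namespace Statement5Aux
open VPAlphabet

variable {A : Type} [VPAlphabet A]

lemma run_bottom (M : VPA A) : ∀ (w : List A) (q : M.Q) (ρ : List M.Γ) (G : M.Γ),
    (∀ p, p <+: w → ncR p ≤ ncC p + ρ.length) →
    ∃ ρ', (M.runAux w q (ρ ++ [G])).2 = ρ' ++ [G]
  | [], q, ρ, G, _ => ⟨ρ, rfl⟩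
  | a :: w, q, ρ, G, hcond => by
    have hcons : ∀ p, p <+: w → a :: p <+: a :: w :=
      fun p hp => List.cons_prefix_cons.mpr ⟨rfl, hp⟩
    cases ρ with
    | nil =>
      cases hk : kind a with
      | call =>
        obtain ⟨G'', hG⟩ := M.call_spec a q G hk
        have := run_bottom M w (M.δ a q G).1 [G''] G (fun p hp => by
          have := hcond (a :: p) (hcons p hp)
          simp [ncR_cons, ncC_cons, hk] at this ⊢; omega)
        simpa [VPA.runAux, hG] using this
      | ret =>
        have := hcond [a] (hcons [] List.nil_prefix)
        simp [ncR_cons, ncC_cons, hk] at this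
      | intern =>
        have hG := M.int_spec a q G hk
        have := run_bottom M w (M.δ a q G).1 [] G (fun p hp => by
          have := hcond (a :: p) (hcons p hp)
          simp [ncR_cons, ncC_cons, hk] at this ⊢; omega)
        simpa [VPA.runAux, hG] using this
    | cons X ρ₂ =>
      cases hk : kind a with
      | call =>
        obtain ⟨G'', hG⟩ := M.call_spec a q X hk
        have := run_bottom M w (M.δ a q X).1 (G'' :: X :: ρ₂) G (fun p hp => by
          have := hcond (a :: p) (hcons p hp)
          simp [ncR_cons, ncC_cons, hk] at this ⊢; omega)
        simpa [VPA.runAux, hG] using this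
      | ret =>
        have hG := M.ret_spec a q X hk
        have := run_bottom M w (M.δ a q X).1 ρ₂ G (fun p hp => by
          have := hcond (a :: p) (hcons p hp)
          simp [ncR_cons, ncC_cons, hk] at this ⊢; omega)
        simpa [VPA.runAux, hG] using this
      | intern =>
        have hG := M.int_spec a q X hk
        have := run_bottom M w (M.δ a q X).1 (X :: ρ₂) G (fun p hp => by
          have := hcond (a :: p) (hcons p hp)
          simp [ncR_cons, ncC_cons, hk] at this ⊢; omega)
        simpa [VPA.runAux, hG] using this

lemma run_wm_snd (M : VPA A) {w : List A} (h : WellMatched w) :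
    ∀ (q : M.Q) (G : M.Γ), (M.runAux w q [G]).2 = [G] := by
  induction h with
  | nil => intro q G; rfl
  | intern c hc => intro q G; simp [VPA.runAux, M.int_spec c q G hc]
  | ext a b w' ha hb hw' ih =>
    intro q G
    obtain ⟨G'', hG⟩ := M.call_spec a q G ha
    have hfr := (run_frame M w' (M.δ a q G).1 [G''] [G] (fun p hp => by
      have := (wm_counts hw').2 p hp
      simp; omega)).1
    have step : M.runAux (a :: w' ++ [b]) q [G]
        = M.runAux (w' ++ [b]) (M.δ a q G).1 [G'', G] := by
      simp [VPA.runAux, hG]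
    rw [step, runAux_append]
    rw [show ([G'', G] : List M.Γ) = [G''] ++ [G] from rfl, hfr, ih]
    simp [VPA.runAux, M.ret_spec b _ G'' hb]
  | append u v hu hv ihu ihv =>
    intro q G
    rw [runAux_append]
    have h1 : M.runAux u q [G] = ((M.runAux u q [G]).1, [G]) :=
      Prod.ext rfl (ihu q G)
    rw [h1]
    exact ihv _ G

lemma run_wm (M : VPA A) {x : List A} (hx : WellMatched x) (q : M.Q) (G : M.Γ)
    (τ : List M.Γ) : M.runAux x q (G :: τ) = ((M.runAux x q [G]).1, G :: τ) := by
  have hfr := (run_frame M x q [G] τ (fun p hp => by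
    have := (wm_counts hx).2 p hp
    simp; omega)).1
  rw [show (G :: τ : List M.Γ) = [G] ++ τ from rfl, hfr, run_wm_snd M hx]

lemma run_ctx_stack (M : VPA A) {u v : List A} (h : WellMatched (u ++ v)) (q : M.Q)
    (G : M.Γ) : ∃ q1 G1 σ1, M.runAux u q [G] = (q1, G1 :: σ1) := by
  have hc := wm_counts h
  have hu : ncR u ≤ ncC u := hc.2 u (u.prefix_append v)
  have hlen := (run_frame M u q [G] [] (fun p hp => by
    have := hc.2 p (hp.trans (u.prefix_append v))
    simp; omega)).2
  match hm : M.runAux u q [G] with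
  | (q1, []) =>
    rw [hm] at hlen; simp at hlen; omega
  | (q1, G1 :: σ1) => exact ⟨q1, G1, σ1, rfl⟩

end Statement5Aux
namespace Statement5Aux
open VPAlphabet

variable {A : Type} [VPAlphabet A]

def Beh (M : VPA A) : Type := M.Q → M.Γ → M.Q

instance (M : VPA A) : Monoid (Beh M) where
  one := fun q _ => q
  mul f g := fun q G => g (f q G) G
  mul_assoc f g h := rfl
  one_mul f := rfl
  mul_one f := rfl

instance (M : VPA A) : Finite (Beh M) := by unfold Beh; infer_instance

@[simp] lemma Beh.mul_apply {M : VPA A} (f g : Beh M) (q : M.Q) (G : M.Γ) :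
    (f * g) q G = g (f q G) G := rfl
@[simp] lemma Beh.one_apply {M : VPA A} (q : M.Q) (G : M.Γ) : (1 : Beh M) q G = q := rfl

def behHom (M : VPA A) : WM A →* Beh M where
  toFun x := fun q G => (M.runAux x.1 q [G]).1
  map_one' := rfl
  map_mul' x y := by
    funext q G
    show (M.runAux (x.1 ++ y.1) q [G]).1 = _
    rw [runAux_append]
    have h1 : M.runAux x.1 q [G] = ((M.runAux x.1 q [G]).1, [G]) :=
      Prod.ext rfl (run_wm_snd M x.2 q G)
    rw [h1]
    rfl

@[simp] lemma behHom_apply (M : VPA A) (x : WM A) (q : M.Q) (G : M.Γ) :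
    behHom M x q G = (M.runAux x.1 q [G]).1 := rfl

def ctxF (M : VPA A) (u v : List A) : Function.End (Beh M) := fun r q G =>
  (M.runAux u q [G]).2.head?.elim q
    (fun G1 => (M.runAux v (r (M.runAux u q [G]).1 G1) (M.runAux u q [G]).2).1)

lemma ctxF_eval (M : VPA A) (u v : List A) (r : Beh M) (q : M.Q) (G : M.Γ)
    {q1 : M.Q} {G1 : M.Γ} {σ1 : List M.Γ} (h : M.runAux u q [G] = (q1, G1 :: σ1)) :
    ctxF M u v r q G = (M.runAux v (r q1 G1) (G1 :: σ1)).1 := by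
  unfold ctxF
  rw [h]
  rfl

def behExt (M : VPA A) : ExtAlgebra (Beh M) where
  O := ⊤
  mulLeft_mem _ := trivial
  mulRight_mem _ := trivial

end Statement5Aux
namespace Statement5Aux
open VPAlphabet

variable {A : Type} [VPAlphabet A]

def behExtHom (M : VPA A) : ExtHomWM A (behExt M) where
  toMonoidHom := behHom M
  op u v _ := ⟨ctxF M u v, trivial⟩
  op_one := Subtype.ext (by funext r q G; rfl)
  op_spec := by
    intro u v h x
    show ctxF M u v (behHom M x) = behHom M (extWord u v h x)
    funext q G
    obtain ⟨q1, G1, σ1, hrun⟩ := run_ctx_stack M h q G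
    rw [ctxF_eval M u v (behHom M x) q G hrun]
    rw [behHom_apply]
    rw [behHom_apply]
    rw [extWord_val]
    rw [runAux_append]
    rw [runAux_append]
    rw [hrun]
    have e3 : M.runAux x.1 ((q1, G1 :: σ1).1) ((q1, G1 :: σ1).2)
        = ((M.runAux x.1 q1 [G1]).1, G1 :: σ1) := run_wm M x.2 q1 G1 σ1
    rw [e3]
  op_comp := by
    intro u v h u' v' h' h''
    apply Subtype.ext
    funext r q G
    show ctxF M (u ++ u') (v' ++ v) r q G = ctxF M u v (ctxF M u' v' r) q G
    obtain ⟨q1, G1, σ1, hu⟩ := run_ctx_stack M h q G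
    obtain ⟨q1', G2, σ2, hu'⟩ := run_ctx_stack M h' q1 G1
    have hwc' := wm_counts h'
    have hlenu' := (run_frame M u' q1 [G1] [] (fun p hp => by
      have := hwc'.2 p (hp.trans (u'.prefix_append v')); simp; omega)).2
    rw [hu'] at hlenu'
    simp at hlenu'
    have hfru' := (run_frame M u' q1 [G1] σ1 (fun p hp => by
      have := hwc'.2 p (hp.trans (u'.prefix_append v')); simp; omega)).1
    have hUU : M.runAux (u ++ u') q [G] = (q1', G2 :: (σ2 ++ σ1)) := by
      rw [runAux_append, hu]
      show M.runAux u' q1 ([G1] ++ σ1) = _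
      rw [hfru', hu']
      rfl
    rw [ctxF_eval M (u ++ u') (v' ++ v) r q G hUU, ctxF_eval M u v (ctxF M u' v' r) q G hu,
        ctxF_eval M u' v' r q1 G1 hu']
    have hpre : ∀ p, p <+: v' → ncR p + ncR u' ≤ ncC p + ncC u' := fun p hp => by
      have := hwc'.2 (u' ++ p) (by obtain ⟨t, rfl⟩ := hp; exact ⟨t, by simp⟩)
      simp at this; omega
    set q4 := r q1' G2 with hq4
    have hfrv' := run_frame M v' q4 (G2 :: σ2) σ1 (fun p hp => by
      have := hpre p hp; simp; omega)
    obtain ⟨ρu, hρu⟩ := run_bottom M u' q1 [] G1 (fun p hp => by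
      have := hwc'.2 p (hp.trans (u'.prefix_append v')); simpa using this)
    simp only [List.nil_append] at hρu
    rw [hu'] at hρu
    simp only at hρu
    have hρulen : ρu.length = σ2.length := by
      have := congrArg List.length hρu; simp at this; omega
    obtain ⟨ρ'', hρ''⟩ := run_bottom M v' q4 ρu G1 (fun p hp => by
      have := hpre p hp; omega)
    rw [← hρu] at hρ''
    have hS : (M.runAux v' q4 (G2 :: σ2)).2 = [G1] := by
      have hl := hfrv'.2
      have hbal := hwc'.1
      simp at hbal hl
      rw [hρ''] at hl
      simp at hl
      have hz : ρ''.length = 0 := by omega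
      rw [List.length_eq_zero_iff.mp hz] at hρ''
      simpa using hρ''
    rw [runAux_append]
    have e : M.runAux v' q4 (G2 :: (σ2 ++ σ1))
        = ((M.runAux v' q4 (G2 :: σ2)).1, (M.runAux v' q4 (G2 :: σ2)).2 ++ σ1) := hfrv'.1
    rw [e, hS]
    rfl

lemma behExt_lang (M : VPA A) : Recognises (behExtHom M) M.lang := by
  have key : ∀ x : WM A, x ∈ M.lang ↔ behHom M x M.q0 M.bot ∈ M.F := by
    intro x
    show M.Accepts x.1 ↔ _
    unfold VPA.Accepts
    rw [run_wm_snd M x.2]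
    simp
  apply Set.eq_of_subset_of_subset
  · intro x hx
    exact ⟨x, hx, rfl⟩
  · rintro x ⟨y, hy, hxy⟩
    rw [key]
    have : behHom M y = behHom M x := hxy
    rw [← this]
    exact (key y).mp hy

end Statement5Aux
namespace Statement5Aux
open VPAlphabet

variable {A : Type} [VPAlphabet A]

def intVal {R : Type} [Monoid R] {ER : ExtAlgebra R} (φ : ExtHomWM A ER) (a : A) : R :=
  if h : kind a = VPKind.intern then φ.toMonoidHom ⟨[a], WellMatched.intern a h⟩ else 1

def retOp {R : Type} [Monoid R] {ER : ExtAlgebra R} (φ : ExtHomWM A ER) (a b : A) :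
    Function.End R :=
  if h : kind a = VPKind.call ∧ kind b = VPKind.ret then
    (φ.op [a] [b] (WellMatched.ext a b [] h.1 h.2 WellMatched.nil) : Function.End R)
  else 1

def retState {R : Type} [Monoid R] {ER : ExtAlgebra R} (φ : ExtHomWM A ER) (b : A)
    (G : Option (R × A)) (s : R) : R :=
  match G with
  | none => 1
  | some (r, a) => r * retOp φ a b s

noncomputable instance optFinite (α : Type*) [Finite α] : Finite (Option α) := by
  have : Fintype α := Fintype.ofFinite α
  infer_instance

@[reducible] def mkVPA {R : Type} [Monoid R] [Finite R] {ER : ExtAlgebra R} (φ : ExtHomWM A ER)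
    [Finite A] (F : Set R) : VPA A where
  Q := R
  q0 := 1
  Γ := Option (R × A)
  bot := none
  F := F
  δ := fun a s G =>
    if kind a = VPKind.call then (1, [some (s, a), G])
    else if kind a = VPKind.ret then (retState φ a G s, [])
    else (s * intVal φ a, [G])
  call_spec := fun a q G h => ⟨some (q, a), by simp [h]⟩
  ret_spec := fun a q G h => by
    have h1 : kind a ≠ VPKind.call := by simp [h]
    simp [h, h1]
  int_spec := fun a q G h => by
    have h1 : kind a ≠ VPKind.call := by simp [h]
    have h2 : kind a ≠ VPKind.ret := by simp [h]
    simp [h1, h2]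

lemma mkVPA_run {R : Type} [Monoid R] [Finite R] {ER : ExtAlgebra R} (φ : ExtHomWM A ER)
    [Finite A] (F : Set R) {w : List A} (hw : WellMatched w) :
    ∀ (s : R) (G : Option (R × A)) (τ : List (Option (R × A))),
      (mkVPA φ F).runAux w s (G :: τ) = (s * φ.toMonoidHom ⟨w, hw⟩, G :: τ) := by
  induction hw with
  | nil =>
    intro s G τ
    show (s, G :: τ) = (s * φ.toMonoidHom 1, G :: τ)
    rw [map_one, mul_one]
  | intern c hc =>
    intro s G τ
    have h1 : kind c ≠ VPKind.call := by simp [hc]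
    have h2 : kind c ≠ VPKind.ret := by simp [hc]
    show (mkVPA φ F).runAux [] _ _ = _
    simp only [VPA.runAux, mkVPA, if_neg h1, if_neg h2]
    rw [intVal, dif_pos hc]
    rfl
  | ext a b w' ha hb hw' ih =>
    intro s G τ
    have hab : WellMatched ([a] ++ [b]) := WellMatched.ext a b [] ha hb WellMatched.nil
    have step1 : (mkVPA φ F).runAux (a :: w' ++ [b]) s (G :: τ)
        = (mkVPA φ F).runAux (w' ++ [b]) 1 (some (s, a) :: G :: τ) := by
      show (mkVPA φ F).runAux (w' ++ [b]) ((mkVPA φ F).δ a s G).1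
            (((mkVPA φ F).δ a s G).2 ++ τ) = _
      simp only [mkVPA, if_pos ha]
      rfl
    rw [step1, runAux_append, ih 1 (some (s, a)) (G :: τ)]
    have hret : kind b ≠ VPKind.call := by simp [hb]
    show (mkVPA φ F).runAux [] _ _ = _
    simp only [VPA.runAux, mkVPA, if_neg hret, if_pos hb]
    simp only [List.nil_append]
    rw [retState]
    have hcr : kind a = VPKind.call ∧ kind b = VPKind.ret := ⟨ha, hb⟩
    rw [retOp, dif_pos hcr, one_mul]
    have := φ.op_spec [a] [b] hab (⟨w', hw'⟩ : WM A)
    rw [this]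
    have : extWord [a] [b] hab ⟨w', hw'⟩ = ⟨a :: w' ++ [b], WellMatched.ext a b w' ha hb hw'⟩ :=
      Subtype.ext rfl
    rw [this]
  | append u v hu hv ihu ihv =>
    intro s G τ
    rw [runAux_append, ihu s G τ, ihv _ G τ]
    have hmul : φ.toMonoidHom (⟨u ++ v, WellMatched.append u v hu hv⟩ : WM A)
        = φ.toMonoidHom ⟨u, hu⟩ * φ.toMonoidHom ⟨v, hv⟩ :=
      @map_mul (WM A) R (WM A →* R) _ _ _ _ φ.toMonoidHom ⟨u, hu⟩ ⟨v, hv⟩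
    rw [mul_assoc, ← hmul]

lemma mkVPA_lang {R : Type} [Monoid R] [Finite R] {ER : ExtAlgebra R} (φ : ExtHomWM A ER)
    [Finite A] (L : Set (WM A)) (hrec : Recognises φ L) :
    L = (mkVPA φ (φ.toMonoidHom '' L)).lang := by
  have key : ∀ x : WM A, x ∈ (mkVPA φ (φ.toMonoidHom '' L)).lang ↔
      φ.toMonoidHom x ∈ φ.toMonoidHom '' L := by
    intro x
    show (mkVPA φ _).Accepts x.1 ↔ _
    unfold VPA.Accepts
    have hr := mkVPA_run φ (φ.toMonoidHom '' L) x.2 1 none []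
    rw [show (⟨x.1, x.2⟩ : WM A) = x from rfl] at hr
    show ((mkVPA φ _).runAux x.1 1 (none :: []) ).1 ∈ _ ∧
        ((mkVPA φ _).runAux x.1 1 (none :: [])).2 = [none] ↔ _
    rw [hr, one_mul]
    simp
  ext x
  rw [key x]
  conv_lhs => rw [hrec]
  rfl

end Statement5Aux

/-- A language of well-matched words is a visibly pushdown language iff it is
recognised by a finite `Ext`-algebra. -/
theorem statement5 {A : Type} [VPAlphabet A] [Finite A] (L : Set (WM A)) :
    IsVPL L ↔ ∃ (R : BExt) (φ : ExtHomWM A R.ext), Recognises φ L := by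
  constructor
  · rintro ⟨M, rfl⟩
    exact ⟨⟨Statement5Aux.Beh M, Statement5Aux.behExt M⟩, Statement5Aux.behExtHom M,
      Statement5Aux.behExt_lang M⟩
  · rintro ⟨R, φ, hrec⟩
    exact ⟨Statement5Aux.mkVPA φ (φ.toMonoidHom '' L), Statement5Aux.mkVPA_lang φ L hrec⟩
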